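/- Proposition 1. Let j ≥ 1 be an integer and let α, γ ∈ ℝ satisfy cos(γ/2)·sin(α/2) = cos(jπ/(2j+1)). Then the real part of the quaternion (Q¹)ʲ · Q⁴ equals cos(jπ/(2j+1)); equivalently, the internal rotation angle θ_{41ʲ} = 2·arccos(Re((Q¹)ʲ · Q⁴)) generated by the cell with itinerary 41ʲ equals 2jπ/(2j+1). -/

import Mathlib

open Quaternion Polynomial Polynomial.Chebyshev Real

/-- Quaternion representation of the atomic rotation in atom `P₁` (with `β = α`). -/
noncomputable def Q1 (α γ : ℝ) : ℍ[ℝ] :=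
  ⟨cos (α/2)^2 - cos γ * sin (α/2)^2,
   cos (α/2) * sin (α/2) * sin γ,
   -(sin (α/2)^2) * sin γ,
   sin (α/2) * cos (α/2) * (1 + cos γ)⟩

/-- Quaternion representation of the atomic rotation in atom `P₄` (with `β = α`). -/
noncomputable def Q4 (α γ : ℝ) : ℍ[ℝ] :=
  ⟨1 - 2 * cos (α/2)^2 * cos (γ/2)^2,
   -2 * sin (α/2) * cos (α/2) * sin (γ/2) * cos (γ/2),
   -2 * cos (α/2)^2 * sin (γ/2) * cos (γ/2),
   -2 * sin (α/2) * cos (α/2) * cos (γ/2)^2⟩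

/-- Any quaternion satisfies its characteristic quadratic. -/
lemma quat_sq (q : ℍ[ℝ]) :
    q * q = (2*q.re) • q - (q.re^2+q.imI^2+q.imJ^2+q.imK^2) • 1 := by
  ext <;>
    simp [Quaternion.re_mul, Quaternion.imI_mul, Quaternion.imJ_mul, Quaternion.imK_mul] <;>
    ring

/-- Proposition 1: if `cos(γ/2)·sin(α/2) = cos(jπ/(2j+1))` then the real part of
`(Q¹)ʲ · Q⁴` equals `cos(jπ/(2j+1))`, equivalently the internal rotation angle
`θ_{41ʲ} = 2·arccos(Re((Q¹)ʲ · Q⁴))` equals `2jπ/(2j+1)`. -/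
theorem prop1_resonance (j : ℕ) (hj : 1 ≤ j) (α γ : ℝ)
    (h : cos (γ/2) * sin (α/2) = cos ((j : ℝ) * π / (2 * (j : ℝ) + 1))) :
    (Q1 α γ ^ j * Q4 α γ).re = cos ((j : ℝ) * π / (2 * (j : ℝ) + 1)) ∧
    2 * arccos ((Q1 α γ ^ j * Q4 α γ).re) = 2 * (j : ℝ) * π / (2 * (j : ℝ) + 1) := by
  have hj1 : (1:ℝ) ≤ (j:ℝ) := by exact_mod_cast hj
  have hD : (0:ℝ) < 2 * (j:ℝ) + 1 := by linarith
  set φ : ℝ := (j : ℝ) * π / (2 * (j : ℝ) + 1) with hφdef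
  set ψ : ℝ := π / (2 * (j : ℝ) + 1) with hψdef
  have hpi := Real.pi_pos
  have hφ0 : 0 < φ := div_pos (by nlinarith) hD
  have hφlt : φ < π/2 := by
    rw [hφdef, div_lt_div_iff₀ hD (by norm_num)]
    nlinarith
  have hp : 0 < cos φ := Real.cos_pos_of_mem_Ioo ⟨by linarith, hφlt⟩
  have hq : 0 < sin φ := Real.sin_pos_of_pos_of_lt_pi hφ0 (by linarith)
  have hψφ : ψ = π - 2*φ := by
    rw [hψdef, hφdef]; field_simp; ring
  have hjψ : (j:ℝ) * ψ = φ := by rw [hψdef, hφdef]; ring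
  have hcosψ : cos ψ = 1 - 2 * cos φ ^ 2 := by
    rw [hψφ, Real.cos_pi_sub, Real.cos_two_mul]; ring
  have hsinψ : sin ψ = 2 * sin φ * cos φ := by
    rw [hψφ, Real.sin_pi_sub, Real.sin_two_mul]
  have hsψ : sin ψ ≠ 0 := by rw [hsinψ]; positivity
  -- trig preliminaries
  have hpyth : sin (α/2)^2 + cos (α/2)^2 = 1 := Real.sin_sq_add_cos_sq _
  have hpg : sin γ ^ 2 + cos γ ^ 2 = 1 := Real.sin_sq_add_cos_sq _
  have hcg : cos γ = 2 * cos (γ/2)^2 - 1 := by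
    have := Real.cos_two_mul (γ/2)
    rw [show (2:ℝ)*(γ/2) = γ by ring] at this
    linarith
  have hsg : sin γ = 2 * sin (γ/2) * cos (γ/2) := by
    have := Real.sin_two_mul (γ/2)
    rw [show (2:ℝ)*(γ/2) = γ by ring] at this
    linarith
  -- Q1 is a unit quaternion
  have hn : (Q1 α γ).re^2+(Q1 α γ).imI^2+(Q1 α γ).imJ^2+(Q1 α γ).imK^2 = 1 := by
    simp only [Q1]
    linear_combination (sin (α/2)^2 + cos (α/2)^2 + 1) * hpyth +
      (sin (α/2)^2 + cos (α/2)^2) * sin (α/2)^2 * hpg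
  set w : ℝ := (Q1 α γ).re with hwdef
  have hQ1sq : Q1 α γ * Q1 α γ = (2*w) • Q1 α γ - (1:ℝ) • 1 := by
    rw [quat_sq, hn]
  -- value of w
  have hw : w = 1 - 2 * cos φ ^ 2 := by
    rw [hwdef, ← h]
    simp only [Q1]
    rw [hcg]
    linear_combination hpyth
  -- the sequence of real parts
  set r : ℕ → ℝ := fun n => (Q1 α γ ^ n * Q4 α γ).re with hrdef
  have hrec : ∀ n, r (n+2) = 2*w * r (n+1) - r n := by
    intro n
    have hpow : Q1 α γ ^ (n+2) = (2*w) • Q1 α γ ^ (n+1) - Q1 α γ ^ n := by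
      rw [pow_succ, pow_succ, mul_assoc, hQ1sq, mul_sub, mul_smul_comm, mul_smul_comm,
        ← pow_succ]
      simp
    simp only [hrdef, hpow, sub_mul, smul_mul_assoc]
    simp [mul_comm]
  set A : ℝ := r 0 with hAdef
  set B : ℝ := (r 1 - A * cos ψ) / sin ψ with hBdef
  have key : ∀ n : ℕ, (r n = A * cos ((n:ℝ)*ψ) + B * sin ((n:ℝ)*ψ) ∧
      r (n+1) = A * cos (((n:ℝ)+1)*ψ) + B * sin (((n:ℝ)+1)*ψ)) := by
    intro n
    induction n with
    | zero =>
      constructor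
      · simp [hAdef]
      · push_cast
        rw [hBdef]
        field_simp
        rw [zero_add, one_mul]
        ring
    | succ n ih =>
      have ih1 := ih.1
      have ih2 := ih.2
      constructor
      · push_cast
        exact ih2
      · push_cast
        have h1 : r (n+1+1) = 2*w*r (n+1) - r n := hrec n
        rw [h1, ih1, ih2, hw, ← hcosψ,
          show ((n:ℝ)+1+1)*ψ = ((n:ℝ)+1)*ψ + ψ by ring,
          show ((n:ℝ))*ψ = ((n:ℝ)+1)*ψ - ψ by ring,
          Real.cos_add, Real.sin_add, Real.cos_sub, Real.sin_sub]
        ring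
  -- values of r 0 and r 1
  have hr0 : A = 1 - 2 * cos (α/2)^2 * cos (γ/2)^2 := by
    rw [hAdef]
    simp [hrdef, Quaternion.re_mul]
    simp [Q4]
  have hr1 : r 1 = (cos (α/2)^2 - (2*cos (γ/2)^2 - 1) * sin (α/2)^2) *
      (1 - 2 * cos (α/2)^2 * cos (γ/2)^2)
      + 4 * sin (α/2)^2 * cos (α/2)^2 * cos (γ/2)^4 := by
    simp only [hrdef, pow_one, Quaternion.re_mul]
    simp only [Q1, Q4]
    rw [hcg, hsg]
    ring
  have hr1' : r 1 = A + 2*cos φ^2 - 4*A*cos φ^2 := by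
    rw [hr1, hr0, ← h]
    linear_combination (1 - 2*cos (α/2)^2*cos (γ/2)^2) * hpyth
  -- the main identity
  have hrj : r j = cos φ := by
    have hk := (key j).1
    rw [hjψ] at hk
    rw [hk, hBdef, hcosψ, hsinψ, hr1']
    have hcp : cos φ ≠ 0 := ne_of_gt hp
    have hsp : sin φ ≠ 0 := ne_of_gt hq
    field_simp
    ring
  refine ⟨hrj, ?_⟩
  rw [show (Q1 α γ ^ j * Q4 α γ).re = r j from rfl, hrj,
    Real.arccos_cos (le_of_lt hφ0) (by linarith)]
  rw [hφdef]; ring
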